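/- Let q : [0,1] → ℝ be continuous and nonnegative, and let φ : [0,1] × (0,∞) → ℝ be continuously differentiable such that for every z > 0 the function φ(·,z) is the Prüfer angle of q at z, i.e. ∂φ/∂x (x,z) = z − (q(x)/z)·sin²(φ(x,z)) and φ(0,z) = 0. Let r(x,z) = exp(∫₀ˣ (q(t)/z)·sin(φ(t,z))·cos(φ(t,z)) dt). Then for every x ∈ [0,1] and z > 0, the derivative with respect to z of the scaled angle θ(x,z) = φ(x,z)/z equals (2/(z²·r(x,z)²)) · ∫₀ˣ r(t,z)² · (q(t)/z) · (sin²(φ(t,z)) − φ(t,z)·sin(φ(t,z))·cos(φ(t,z))) dt. -/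

import Mathlib

open Real Set MeasureTheory

set_option maxHeartbeats 1000000

/-- Existence of a continuous partial derivative in the second variable for a `C¹` function
on `Icc 0 1 ×ˢ Ioi 0`. -/
lemma exists_psi (φ : ℝ → ℝ → ℝ)
    (hC1 : ContDiffOn ℝ 1 (fun p : ℝ × ℝ => φ p.1 p.2) (Icc 0 1 ×ˢ Ioi 0)) :
    ∃ ψ : ℝ → ℝ → ℝ,
      ContinuousOn (fun p : ℝ × ℝ => ψ p.1 p.2) (Icc 0 1 ×ˢ Ioi 0) ∧
      ∀ a ∈ Icc (0:ℝ) 1, ∀ w ∈ Ioi (0:ℝ), HasDerivAt (fun w' => φ a w') (ψ a w) w := by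
  set S : Set (ℝ × ℝ) := Icc 0 1 ×ˢ Ioi 0 with hSdef
  have hS : UniqueDiffOn ℝ S := (uniqueDiffOn_Icc zero_lt_one).prod isOpen_Ioi.uniqueDiffOn
  refine ⟨fun a w => fderivWithin ℝ (fun p : ℝ × ℝ => φ p.1 p.2) S (a, w) (0, 1), ?_, ?_⟩
  · exact (hC1.continuousOn_fderivWithin hS le_rfl).clm_apply continuousOn_const
  · intro a ha w hw
    have hd : HasFDerivWithinAt (fun p : ℝ × ℝ => φ p.1 p.2)
        (fderivWithin ℝ (fun p : ℝ × ℝ => φ p.1 p.2) S (a, w)) S (a, w) :=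
      ((hC1.differentiableOn one_ne_zero) (a, w) ⟨ha, hw⟩).hasFDerivWithinAt
    have hc : HasDerivWithinAt (fun w' : ℝ => ((a, w') : ℝ × ℝ)) ((0:ℝ), (1:ℝ)) (Ioi 0) w :=
      ((hasDerivAt_const w a).prodMk (hasDerivAt_id w)).hasDerivWithinAt
    have hmaps : MapsTo (fun w' : ℝ => ((a, w') : ℝ × ℝ)) (Ioi 0) S := fun w' hw' => ⟨ha, hw'⟩
    have := hd.comp_hasDerivWithinAt w hc hmaps
    exact this.hasDerivAt (Ioi_mem_nhds hw)

/-- Formula for the derivative in z of the scaled Prüfer angle θ(x,z) = φ(x,z)/z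
(Corollary 3.3 of Horváth–Kiss). Here r(x,z) = exp(∫₀ˣ (q/z)·sinφ·cosφ). -/
theorem scaled_prufer_angle_deriv_formula
    (q : ℝ → ℝ) (hqc : ContinuousOn q (Icc 0 1))
    (hqnonneg : ∀ x ∈ Icc (0:ℝ) 1, 0 ≤ q x)
    (φ : ℝ → ℝ → ℝ)
    (hC1 : ContDiffOn ℝ 1 (fun p : ℝ × ℝ => φ p.1 p.2) (Icc 0 1 ×ˢ Ioi 0))
    (hφ0 : ∀ z > (0:ℝ), φ 0 z = 0)
    (hφODE : ∀ z > (0:ℝ), ∀ x ∈ Icc (0:ℝ) 1,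
      HasDerivAt (fun x' => φ x' z) (z - q x / z * Real.sin (φ x z) ^ 2) x) :
    ∀ x ∈ Icc (0:ℝ) 1, ∀ z > (0:ℝ),
      HasDerivAt (fun w => φ x w / w)
        (2 / (z ^ 2 *
            (Real.exp (∫ t in (0:ℝ)..x, q t / z * Real.sin (φ t z) * Real.cos (φ t z))) ^ 2) *
          ∫ t in (0:ℝ)..x,
            (Real.exp (∫ s in (0:ℝ)..t, q s / z * Real.sin (φ s z) * Real.cos (φ s z))) ^ 2 *
              (q t / z) *
              (Real.sin (φ t z) ^ 2 - φ t z * Real.sin (φ t z) * Real.cos (φ t z)))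
        z := by
  obtain ⟨ψ, hψc, hψd⟩ := exists_psi φ hC1
  have hφc : ContinuousOn (fun p : ℝ × ℝ => φ p.1 p.2) (Icc 0 1 ×ˢ Ioi 0) := hC1.continuousOn
  have hφcont' : ∀ w > (0:ℝ), ContinuousOn (fun t => φ t w) (Icc 0 1) := by
    intro w hw
    exact hφc.comp (continuous_id.prodMk continuous_const).continuousOn
      (fun t ht => ⟨ht, hw⟩)
  have hψcont' : ∀ w > (0:ℝ), ContinuousOn (fun t => ψ t w) (Icc 0 1) := by
    intro w hw
    exact hψc.comp (continuous_id.prodMk continuous_const).continuousOn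
      (fun t ht => ⟨ht, hw⟩)
  -- integral representation of φ in the first variable
  have hφrep : ∀ w > (0:ℝ), ∀ b ∈ Icc (0:ℝ) 1,
      φ b w = ∫ t in (0:ℝ)..b, (w - q t / w * Real.sin (φ t w) ^ 2) := by
    intro w hw b hb
    have hsub : uIcc (0:ℝ) b ⊆ Icc 0 1 := by
      rw [uIcc_of_le hb.1]; exact Icc_subset_Icc le_rfl hb.2
    have hcont : ContinuousOn (fun t => w - q t / w * Real.sin (φ t w) ^ 2) (Icc 0 1) :=
      continuousOn_const.sub ((hqc.div_const w).mul
        ((Real.continuous_sin.comp_continuousOn (hφcont' w hw)).pow 2))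
    have hint : IntervalIntegrable (fun t => w - q t / w * Real.sin (φ t w) ^ 2) volume 0 b :=
      (hcont.mono hsub).intervalIntegrable
    have := intervalIntegral.integral_eq_sub_of_hasDerivAt
      (fun t ht => hφODE w hw t (hsub ht)) hint
    rw [this, hφ0 w hw, sub_zero]
  intro x hx z hz
  have hφcont : ContinuousOn (fun t => φ t z) (Icc 0 1) := hφcont' z hz
  have hψcont : ContinuousOn (fun t => ψ t z) (Icc 0 1) := hψcont' z hz
  -- integral representation of ψ in the first variable (differentiation under the integral)
  have hψrep : ∀ b ∈ Icc (0:ℝ) 1, ψ b z = ∫ t in (0:ℝ)..b,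
      (1 + q t / z ^ 2 * Real.sin (φ t z) ^ 2
        - 2 * (q t / z) * Real.sin (φ t z) * Real.cos (φ t z) * ψ t z) := by
    intro b hb
    set F : ℝ → ℝ → ℝ := fun w t => w - q t / w * Real.sin (φ t w) ^ 2 with hF
    set F' : ℝ → ℝ → ℝ := fun w t =>
      1 + q t / w ^ 2 * Real.sin (φ t w) ^ 2
        - 2 * (q t / w) * Real.sin (φ t w) * Real.cos (φ t w) * ψ t w with hF'
    have hsub : uIcc (0:ℝ) b ⊆ Icc 0 1 := by
      rw [uIcc_of_le hb.1]; exact Icc_subset_Icc le_rfl hb.2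
    have hsub' : Set.uIoc (0:ℝ) b ⊆ Icc 0 1 := Set.uIoc_subset_uIcc.trans hsub
    have hε : (0:ℝ) < z / 2 := by positivity
    have hballpos : ∀ w ∈ Metric.ball z (z/2), (0:ℝ) < w := by
      intro w hw
      rw [Metric.mem_ball, Real.dist_eq, abs_sub_lt_iff] at hw
      linarith [hw.2]
    have hballIcc : ∀ w ∈ Metric.ball z (z/2), w ∈ Icc (z/2) (3*z/2) := by
      intro w hw
      rw [Metric.mem_ball, Real.dist_eq, abs_sub_lt_iff] at hw
      constructor <;> [linarith [hw.2]; linarith [hw.1]]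
    have hFcont : ∀ w > (0:ℝ), ContinuousOn (F w) (Icc 0 1) := by
      intro w hw
      exact continuousOn_const.sub ((hqc.div_const w).mul
        ((Real.continuous_sin.comp_continuousOn (hφcont' w hw)).pow 2))
    have hF'cont : ContinuousOn (fun p : ℝ × ℝ => F' p.2 p.1) (Icc 0 1 ×ˢ Ioi 0) := by
      have hq2 : ContinuousOn (fun p : ℝ × ℝ => q p.1) (Icc 0 1 ×ˢ Ioi 0) :=
        hqc.comp continuous_fst.continuousOn (fun p hp => hp.1)
      have hw2 : ContinuousOn (fun p : ℝ × ℝ => p.2) (Icc 0 1 ×ˢ Ioi 0) :=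
        continuous_snd.continuousOn
      have hwne : ∀ p ∈ (Icc 0 1 ×ˢ Ioi 0 : Set (ℝ × ℝ)), p.2 ≠ 0 :=
        fun p hp => ne_of_gt hp.2
      have hsin : ContinuousOn (fun p : ℝ × ℝ => Real.sin (φ p.1 p.2)) (Icc 0 1 ×ˢ Ioi 0) :=
        Real.continuous_sin.comp_continuousOn hφc
      have hcos : ContinuousOn (fun p : ℝ × ℝ => Real.cos (φ p.1 p.2)) (Icc 0 1 ×ˢ Ioi 0) :=
        Real.continuous_cos.comp_continuousOn hφc
      exact (continuousOn_const.add ((hq2.div (hw2.pow 2)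
          (fun p hp => pow_ne_zero 2 (hwne p hp))).mul (hsin.pow 2))).sub
        ((((continuousOn_const.mul (hq2.div hw2 hwne)).mul hsin).mul hcos).mul hψc)
    have hboxsub : (Icc 0 1 ×ˢ Icc (z/2) (3*z/2) : Set (ℝ × ℝ)) ⊆ Icc 0 1 ×ˢ Ioi 0 := by
      rintro ⟨t, w⟩ ⟨ht, hw⟩
      exact ⟨ht, lt_of_lt_of_le hε hw.1⟩
    obtain ⟨C, hC⟩ := (isCompact_Icc.prod isCompact_Icc).exists_bound_of_continuousOn
      (hF'cont.mono hboxsub)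
    have key := intervalIntegral.hasDerivAt_integral_of_dominated_loc_of_deriv_le
      (F := F) (F' := F') (x₀ := z) (a := 0) (b := b) (bound := fun _ => C) (μ := volume) (s := Metric.ball z (z/2)) (Metric.ball_mem_nhds z hε)
      ?_ ?_ ?_ ?_ ?_ ?_
    · have heq : (fun w => ∫ t in (0:ℝ)..b, F w t) =ᶠ[nhds z] fun w => φ b w := by
        filter_upwards [Ioi_mem_nhds hz] with w hw
        exact (hφrep w hw b hb).symm
      have h2 : HasDerivAt (fun w => φ b w) (∫ t in (0:ℝ)..b, F' z t) z :=
        key.2.congr_of_eventuallyEq heq.symm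
      exact (hψd b hb z hz).unique h2
    · filter_upwards [Ioi_mem_nhds hz] with w hw
      exact (((hFcont w hw).mono hsub').aestronglyMeasurable measurableSet_uIoc)
    · exact ((hFcont z hz).mono hsub).intervalIntegrable
    · have : ContinuousOn (F' z) (Icc 0 1) :=
        hF'cont.comp (continuous_id.prodMk continuous_const).continuousOn
          (fun t ht => ⟨ht, hz⟩)
      exact (this.mono hsub').aestronglyMeasurable measurableSet_uIoc
    · refine Filter.Eventually.of_forall (fun t ht w hw => ?_)
      exact hC (t, w) ⟨hsub' ht, hballIcc w hw⟩
    · exact intervalIntegrable_const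
    · refine Filter.Eventually.of_forall (fun t ht w hw => ?_)
      have ht1 : t ∈ Icc (0:ℝ) 1 := hsub' ht
      have hw0 : (0:ℝ) < w := hballpos w hw
      have h1 : HasDerivAt (fun w' => φ t w') (ψ t w) w := hψd t ht1 w hw0
      have h2 : HasDerivAt (fun w' => Real.sin (φ t w') ^ 2)
          (2 * Real.sin (φ t w) * (Real.cos (φ t w) * ψ t w)) w := by
        have := (h1.sin).fun_pow 2
        simpa [mul_comm, mul_assoc] using this
      have h3 : HasDerivAt (fun w' => q t / w') (-(q t) / w ^ 2) w := by
        have := (hasDerivAt_inv hw0.ne').const_mul (q t)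
        simp only [div_eq_mul_inv]
        convert (show HasDerivAt (fun y => q t * y⁻¹) _ w from this) using 1
        field_simp
      have h4 := h3.fun_mul h2
      have h5 := (hasDerivAt_id w).fun_sub h4
      show HasDerivAt (fun w' => F w' t) (F' w t) w
      convert (show HasDerivAt (fun w' => F w' t) _ w from h5) using 1
      simp only [hF', id]
      field_simp
      ring
  -- extended (projected) versions of q, φ(·,z), ψ(·,z)
  set pr : ℝ → ℝ := fun t => max 0 (min t 1) with hpr
  have hprmem : ∀ t, pr t ∈ Icc (0:ℝ) 1 :=
    fun t => ⟨le_max_left _ _, max_le (by norm_num) (min_le_right _ _)⟩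
  have hprid : ∀ t ∈ Icc (0:ℝ) 1, pr t = t := by
    intro t ht
    simp only [hpr]
    rw [min_eq_left ht.2, max_eq_right ht.1]
  have hprcont : Continuous pr := continuous_const.max (continuous_id.min continuous_const)
  set Q : ℝ → ℝ := fun t => q (pr t) with hQ
  have hQc : Continuous Q := hqc.comp_continuous hprcont hprmem
  set Φv : ℝ → ℝ := fun t => φ (pr t) z with hΦv
  have hΦvc : Continuous Φv := hφcont.comp_continuous hprcont hprmem
  set Ψv : ℝ → ℝ := fun t => ψ (pr t) z with hΨv
  have hΨvc : Continuous Ψv := hψcont.comp_continuous hprcont hprmem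
  -- extended integrands
  set p0 : ℝ → ℝ := fun t => Q t / z * Real.sin (Φv t) * Real.cos (Φv t) with hp0
  set Fe : ℝ → ℝ := fun t => z - Q t / z * Real.sin (Φv t) ^ 2 with hFe
  set Ge : ℝ → ℝ := fun t => 1 + Q t / z ^ 2 * Real.sin (Φv t) ^ 2
      - 2 * (Q t / z) * Real.sin (Φv t) * Real.cos (Φv t) * Ψv t with hGe
  have hp0c : Continuous p0 :=
    ((hQc.div_const z).mul (Real.continuous_sin.comp hΦvc)).mul
      (Real.continuous_cos.comp hΦvc)
  have hFec : Continuous Fe :=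
    continuous_const.sub ((hQc.div_const z).mul ((Real.continuous_sin.comp hΦvc).pow 2))
  have hGec : Continuous Ge :=
    (continuous_const.add ((hQc.div_const (z^2)).mul ((Real.continuous_sin.comp hΦvc).pow 2))).sub
      ((((continuous_const.mul (hQc.div_const z)).mul (Real.continuous_sin.comp hΦvc)).mul
        (Real.continuous_cos.comp hΦvc)).mul hΨvc)
  -- integrating factor
  set Rf : ℝ → ℝ := fun s => Real.exp (2 * ∫ t in (0:ℝ)..s, p0 t) with hRf
  have hintp0d : ∀ s : ℝ, HasDerivAt (fun u => ∫ t in (0:ℝ)..u, p0 t) (p0 s) s :=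
    fun s => (hp0c.integral_hasStrictDerivAt 0 s).hasDerivAt
  have hintp0c : Continuous (fun s => ∫ t in (0:ℝ)..s, p0 t) := by
    rw [continuous_iff_continuousAt]; exact fun s => (hintp0d s).continuousAt
  have hRfc : Continuous Rf := Real.continuous_exp.comp (continuous_const.mul hintp0c)
  have hRfd : ∀ s : ℝ, HasDerivAt Rf (Rf s * (2 * p0 s)) s := by
    intro s
    have := ((hintp0d s).const_mul 2).exp
    simpa [hRf, mul_comm, mul_assoc] using this
  have hRfpos : ∀ s : ℝ, 0 < Rf s := fun s => Real.exp_pos _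
  set Ke : ℝ → ℝ := fun t => Rf t * (2 * Q t / z ^ 2) *
      (Real.sin (Φv t) ^ 2 - Φv t * Real.sin (Φv t) * Real.cos (Φv t)) with hKe
  have hKec : Continuous Ke :=
    (hRfc.mul ((continuous_const.mul hQc).div_const (z^2))).mul
      (((Real.continuous_sin.comp hΦvc).pow 2).sub
        ((hΦvc.mul (Real.continuous_sin.comp hΦvc)).mul (Real.continuous_cos.comp hΦvc)))
  -- FTC derivatives for integrals of Fe, Ge, Ke
  have hFed : ∀ s : ℝ, HasDerivAt (fun u => ∫ t in (0:ℝ)..u, Fe t) (Fe s) s :=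
    fun s => (hFec.integral_hasStrictDerivAt 0 s).hasDerivAt
  have hGed : ∀ s : ℝ, HasDerivAt (fun u => ∫ t in (0:ℝ)..u, Ge t) (Ge s) s :=
    fun s => (hGec.integral_hasStrictDerivAt 0 s).hasDerivAt
  have hKed : ∀ s : ℝ, HasDerivAt (fun u => ∫ t in (0:ℝ)..u, Ke t) (Ke s) s :=
    fun s => (hKec.integral_hasStrictDerivAt 0 s).hasDerivAt
  -- identification of the extended integrals on Icc 0 1
  have hsubIcc : ∀ s ∈ Icc (0:ℝ) 1, uIcc (0:ℝ) s ⊆ Icc 0 1 := by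
    intro s hs
    rw [uIcc_of_le hs.1]; exact Icc_subset_Icc le_rfl hs.2
  have hIF : ∀ s ∈ Icc (0:ℝ) 1, (∫ t in (0:ℝ)..s, Fe t) = φ s z := by
    intro s hs
    rw [hφrep z hz s hs]
    apply intervalIntegral.integral_congr
    intro t ht
    have := hprid t (hsubIcc s hs ht)
    simp only [hFe, hQ, hΦv, this]
  have hIG : ∀ s ∈ Icc (0:ℝ) 1, (∫ t in (0:ℝ)..s, Ge t) = ψ s z := by
    intro s hs
    rw [hψrep s hs]
    apply intervalIntegral.integral_congr
    intro t ht
    have := hprid t (hsubIcc s hs ht)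
    simp only [hGe, hQ, hΦv, hΨv, this]
  have hIp : ∀ s ∈ Icc (0:ℝ) 1, (∫ t in (0:ℝ)..s, p0 t)
      = ∫ t in (0:ℝ)..s, q t / z * Real.sin (φ t z) * Real.cos (φ t z) := by
    intro s hs
    apply intervalIntegral.integral_congr
    intro t ht
    have := hprid t (hsubIcc s hs ht)
    simp only [hp0, hQ, hΦv, this]
  -- the key function H and its vanishing
  set H : ℝ → ℝ := fun s => Rf s * ((∫ t in (0:ℝ)..s, Ge t) - (∫ t in (0:ℝ)..s, Fe t) / z)
      - ∫ t in (0:ℝ)..s, Ke t with hH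
  have hHd : ∀ s ∈ Icc (0:ℝ) 1, HasDerivAt H 0 s := by
    intro s hs
    have h1 := ((hRfd s).fun_mul ((hGed s).fun_sub ((hFed s).div_const z))).fun_sub (hKed s)
    convert (show HasDerivAt H _ s from h1) using 1
    rw [hIG s hs, hIF s hs]
    have hpr_s := hprid s hs
    simp only [hKe, hGe, hFe, hp0, hQ, hΦv, hΨv, hpr_s]
    field_simp
    ring
  have hHcont : Continuous H := by
    have h1 : Continuous (fun s => ∫ t in (0:ℝ)..s, Ge t) := by
      rw [continuous_iff_continuousAt]; exact fun s => (hGed s).continuousAt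
    have h2 : Continuous (fun s => ∫ t in (0:ℝ)..s, Fe t) := by
      rw [continuous_iff_continuousAt]; exact fun s => (hFed s).continuousAt
    have h3 : Continuous (fun s => ∫ t in (0:ℝ)..s, Ke t) := by
      rw [continuous_iff_continuousAt]; exact fun s => (hKed s).continuousAt
    exact (hRfc.mul (h1.sub (h2.div_const z))).sub h3
  have hHconst := constant_of_has_deriv_right_zero (f := H) (a := (0:ℝ)) (b := 1)
    hHcont.continuousOn
    (fun s hs => ((hHd s (Ico_subset_Icc_self hs)).hasDerivWithinAt))
  have hH0 : H 0 = 0 := by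
    simp [hH, intervalIntegral.integral_same]
  have hkey : Rf x * (ψ x z - φ x z / z) = ∫ t in (0:ℝ)..x, Ke t := by
    have h := hHconst x hx
    rw [hH0] at h
    simp only [hH] at h
    rw [hIG x hx, hIF x hx] at h
    linarith
  -- relate Rf to the exp in the statement
  have hRx : ∀ s ∈ Icc (0:ℝ) 1, Rf s =
      (Real.exp (∫ t in (0:ℝ)..s, q t / z * Real.sin (φ t z) * Real.cos (φ t z))) ^ 2 := by
    intro s hs
    simp only [hRf]
    rw [← hIp s hs, two_mul, Real.exp_add, sq]
  -- identify ∫ Ke with the target integral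
  have hKint : (∫ t in (0:ℝ)..x, Ke t) = (2 / z) *
      ∫ t in (0:ℝ)..x,
        (Real.exp (∫ s in (0:ℝ)..t, q s / z * Real.sin (φ s z) * Real.cos (φ s z))) ^ 2 *
          (q t / z) *
          (Real.sin (φ t z) ^ 2 - φ t z * Real.sin (φ t z) * Real.cos (φ t z)) := by
    rw [← intervalIntegral.integral_const_mul]
    apply intervalIntegral.integral_congr
    intro t ht
    have ht1 : t ∈ Icc (0:ℝ) 1 := hsubIcc x hx ht
    have hpr_t := hprid t ht1
    dsimp only
    rw [← hRx t ht1]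
    simp only [hKe, hQ, hΦv, hpr_t]
    field_simp
  -- final assembly
  have hdiv : HasDerivAt (fun w => φ x w / w) ((ψ x z * z - φ x z * 1) / z ^ 2) z :=
    (hψd x hx z hz).div (hasDerivAt_id z) (ne_of_gt hz)
  convert hdiv using 1
  set E := Real.exp (∫ t in (0:ℝ)..x, q t / z * Real.sin (φ t z) * Real.cos (φ t z)) with hE
  set I := ∫ t in (0:ℝ)..x,
        (Real.exp (∫ s in (0:ℝ)..t, q s / z * Real.sin (φ s z) * Real.cos (φ s z))) ^ 2 *
          (q t / z) *
          (Real.sin (φ t z) ^ 2 - φ t z * Real.sin (φ t z) * Real.cos (φ t z)) with hI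
  have hRxE : Rf x = E ^ 2 := hRx x hx
  rw [hRxE, hKint] at hkey
  have hEpos : 0 < E := Real.exp_pos _
  have hE2 : E ^ 2 ≠ 0 := by positivity
  have hψval : ψ x z = φ x z / z + 2 / z * I / E ^ 2 := by
    have h2 : ψ x z - φ x z / z = 2 / z * I / E ^ 2 := by
      rw [eq_div_iff hE2]
      linear_combination hkey
    linarith [h2]
  rw [hψval]
  field_simp
  ring
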